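/- arXiv:1308.1929 — 3 statements merged into one kernel-verified Lean document; each statement's English description precedes it below -/
import Mathlib

section
/- Let Cl be the Clifford algebra over ℂ of the module ℂ⁴ with the quadratic form Q(x) = x_0² − x_1² − x_2² − x_3², let e_a := ι(u_a) for the standard basis vectors, and set γ_5 := i · e_0 e_1 e_2 e_3. For any function a : Fin 4 → Fin 4, define ε(a) ∈ ℤ to be the sign of a viewed as a permutation of {0,1,2,3} if a is bijective, and 0 otherwise (so ε(id) = 1, corresponding to ε_{0123} = 1). Then (1/24) Σ_{σ ∈ S_4} sgn(σ) · e_{a(σ(0))} e_{a(σ(1))} e_{a(σ(2))} e_{a(σ(3))} = −i · ε(a) · γ_5. -/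
open scoped BigOperators

noncomputable section

/-- The quadratic form `Q(x) = x₀² − x₁² − x₂² − x₃²` on `ℂ⁴`
(mostly-minus Minkowski signature `η = diag(1,−1,−1,−1)`). -/
def minkowskiQ : QuadraticForm ℂ (Fin 4 → ℂ) :=
  QuadraticMap.weightedSumSquares ℂ (![1, -1, -1, -1] : Fin 4 → ℂ)

/-- The gamma "matrices" `γ_a = ι(u_a)` in the Clifford algebra of `minkowskiQ`. -/
def gamma (a : Fin 4) : CliffordAlgebra minkowskiQ :=
  CliffordAlgebra.ι minkowskiQ (Pi.single a 1)

/-- The chirality element `γ₅ = i γ₀ γ₁ γ₂ γ₃`. -/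
def gammaFive : CliffordAlgebra minkowskiQ :=
  Complex.I • (gamma 0 * gamma 1 * gamma 2 * gamma 3)

/-- The 4-dimensional epsilon-tensor `ε(a)`: the sign of `a` viewed as a permutation of
`{0,1,2,3}` if `a` is bijective, and `0` otherwise (so `ε(id) = 1`, i.e. `ε_{0123} = 1`). -/
def eps4 (a : Fin 4 → Fin 4) : ℤ :=
  if h : Function.Bijective a then Equiv.Perm.sign (Equiv.ofBijective a h) else 0

/-- Distinct gamma matrices anticommute. -/
lemma gamma_anticomm {i j : Fin 4} (h : i ≠ j) :
    gamma i * gamma j = -(gamma j * gamma i) := by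
  have key := CliffordAlgebra.ι_mul_ι_add_swap (Q := minkowskiQ)
    (Pi.single i (1:ℂ)) (Pi.single j 1)
  have hp : QuadraticMap.polar minkowskiQ (Pi.single i (1:ℂ)) (Pi.single j 1) = 0 := by
    simp [QuadraticMap.polar, minkowskiQ, QuadraticMap.weightedSumSquares_apply,
      Pi.single_apply, Fin.sum_univ_four]
    fin_cases i <;> fin_cases j <;> simp_all
  rw [hp] at key
  simp only [map_zero] at key
  exact eq_neg_of_add_eq_zero_left key

lemma comm3 {R : Type*} [Ring R] {X Y : R} (h : Y * X = -(X * Y)) (z : R) :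
    Y * (X * z) = -(X * (Y * z)) := by
  rw [← mul_assoc, h, neg_mul, mul_assoc]

/-- Swapping two positions in a four-fold gamma product flips the sign. -/
lemma gamma_swapped (c : Fin 4 → Fin 4) (hc : Function.Injective c) (x y : Fin 4)
    (hxy : x ≠ y) :
    gamma (c (Equiv.swap x y 0)) * gamma (c (Equiv.swap x y 1)) *
        gamma (c (Equiv.swap x y 2)) * gamma (c (Equiv.swap x y 3)) =
      -(gamma (c 0) * gamma (c 1) * gamma (c 2) * gamma (c 3)) := by
  have h10 := gamma_anticomm (hc.ne (show (1:Fin 4) ≠ 0 by decide))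
  have h20 := gamma_anticomm (hc.ne (show (2:Fin 4) ≠ 0 by decide))
  have h21 := gamma_anticomm (hc.ne (show (2:Fin 4) ≠ 1 by decide))
  have h30 := gamma_anticomm (hc.ne (show (3:Fin 4) ≠ 0 by decide))
  have h31 := gamma_anticomm (hc.ne (show (3:Fin 4) ≠ 1 by decide))
  have h32 := gamma_anticomm (hc.ne (show (3:Fin 4) ≠ 2 by decide))
  fin_cases x <;> fin_cases y <;>
    first
    | exact absurd rfl hxy
    | norm_num [Equiv.swap_apply_def] <;>
      simp [mul_assoc, h10, h20, h21, h30, h31, h32,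
        comm3 h10, comm3 h20, comm3 h21, comm3 h30, comm3 h31, comm3 h32,
        mul_neg, neg_mul, neg_neg]

/-- Permuting the arguments of a four-fold gamma product produces the sign of
the permutation. -/
lemma gamma_prod_perm (b : Fin 4 → Fin 4) (hb : Function.Injective b)
    (σ : Equiv.Perm (Fin 4)) :
    gamma (b (σ 0)) * gamma (b (σ 1)) * gamma (b (σ 2)) * gamma (b (σ 3)) =
      ((Equiv.Perm.sign σ : ℤ) : ℂ) •
        (gamma (b 0) * gamma (b 1) * gamma (b 2) * gamma (b 3)) := by
  refine Equiv.Perm.swap_induction_on' σ (by simp) ?_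
  intro f x y hxy ih
  have hc : Function.Injective (fun m => b (f m)) := hb.comp f.injective
  have hs := gamma_swapped (fun m => b (f m)) hc x y hxy
  simp only [Equiv.Perm.mul_apply, Equiv.swap_apply_def] at *
  rw [hs, ih]
  rw [Equiv.Perm.sign_mul, Equiv.Perm.sign_swap hxy]
  push_cast
  rw [mul_neg_one, neg_smul]

/-- The gamma-matrix identity `γ_{[a} γ_b γ_c γ_{d]} = −i γ₅ ε_{abcd}` in the
4-dimensional Clifford algebra with quadratic form `x₀² − x₁² − x₂² − x₃²`, where square
brackets denote antisymmetrization with weight `1/4!` over all permutations. -/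
theorem antisymmetrized_gamma_eq_gammaFive (a : Fin 4 → Fin 4) :
    (24 : ℂ)⁻¹ • ∑ σ : Equiv.Perm (Fin 4),
        ((Equiv.Perm.sign σ : ℤ) : ℂ) •
          (gamma (a (σ 0)) * gamma (a (σ 1)) * gamma (a (σ 2)) * gamma (a (σ 3))) =
      (-Complex.I * ((eps4 a : ℤ) : ℂ)) • gammaFive := by
  set F : Equiv.Perm (Fin 4) → CliffordAlgebra minkowskiQ := fun σ =>
    ((Equiv.Perm.sign σ : ℤ) : ℂ) •
      (gamma (a (σ 0)) * gamma (a (σ 1)) * gamma (a (σ 2)) * gamma (a (σ 3))) with hF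
  by_cases h : Function.Bijective a
  · -- bijective case
    have base : ∀ σ : Equiv.Perm (Fin 4),
        F σ = gamma (a 0) * gamma (a 1) * gamma (a 2) * gamma (a 3) := by
      intro σ
      rw [hF]
      simp only
      rw [gamma_prod_perm a h.injective σ, smul_smul, ← Int.cast_mul,
        ← Units.val_mul, Int.units_mul_self, Units.val_one, Int.cast_one, one_smul]
    rw [Finset.sum_congr rfl (fun σ _ => base σ), Finset.sum_const]
    have hcard : (Finset.univ : Finset (Equiv.Perm (Fin 4))).card = 24 := by
      simp [Fintype.card_perm]
      rfl
    rw [hcard]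
    have heps : eps4 a = (Equiv.Perm.sign (Equiv.ofBijective a h) : ℤ) := dif_pos h
    have hprod := gamma_prod_perm id Function.injective_id (Equiv.ofBijective a h)
    simp only [id] at hprod
    have hav : ∀ m : Fin 4, (Equiv.ofBijective a h) m = a m := fun m => rfl
    rw [hav, hav, hav, hav] at hprod
    rw [hprod, heps, gammaFive]
    rw [← Nat.cast_smul_eq_nsmul ℂ, smul_smul, smul_smul, smul_smul]
    congr 1
    ring_nf
    rw [Complex.I_sq]
    ring
  · -- non-bijective case
    have hni : ¬ Function.Injective a := fun hi => h ((Finite.injective_iff_bijective).mp hi)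
    obtain ⟨i, j, hval, hij⟩ := Function.not_injective_iff.mp hni
    have haswap : ∀ k : Fin 4, a (Equiv.swap i j k) = a k := by
      intro k
      rcases eq_or_ne k i with rfl | hki
      · rw [Equiv.swap_apply_left, hval]
      rcases eq_or_ne k j with rfl | hkj
      · rw [Equiv.swap_apply_right, hval]
      · rw [Equiv.swap_apply_of_ne_of_ne hki hkj]
    have hFneg : ∀ σ, F (Equiv.swap i j * σ) = -F σ := by
      intro σ
      rw [hF]
      simp only [Equiv.Perm.mul_apply, Equiv.Perm.sign_mul, Equiv.Perm.sign_swap hij,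
        haswap]
      push_cast
      rw [neg_one_mul, neg_smul]
    have hsum : ∑ σ : Equiv.Perm (Fin 4), F σ = 0 := by
      have := Equiv.sum_comp (Equiv.mulLeft (Equiv.swap i j)) F
      simp only [Equiv.coe_mulLeft] at this
      have h2 : ∑ σ : Equiv.Perm (Fin 4), F σ = -∑ σ : Equiv.Perm (Fin 4), F σ := by
        calc ∑ σ : Equiv.Perm (Fin 4), F σ = ∑ σ : Equiv.Perm (Fin 4), F (Equiv.swap i j * σ) :=
              this.symm
          _ = ∑ σ : Equiv.Perm (Fin 4), -F σ := Finset.sum_congr rfl fun σ _ => hFneg σ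
          _ = -∑ σ : Equiv.Perm (Fin 4), F σ := by rw [Finset.sum_neg_distrib]
      have h3 : (2:ℂ) • ∑ σ : Equiv.Perm (Fin 4), F σ = 0 := by
        rw [two_smul]
        nth_rewrite 2 [h2]
        exact add_neg_cancel _
      have h4 : (∑ σ : Equiv.Perm (Fin 4), F σ) =
          (2:ℂ)⁻¹ • ((2:ℂ) • ∑ σ : Equiv.Perm (Fin 4), F σ) := by
        rw [smul_smul]; norm_num
      rw [h4, h3, smul_zero]
    rw [hsum, eps4, dif_neg h]
    rw [smul_zero, Int.cast_zero, mul_zero, zero_smul]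
end
end

section
/- Let λ, E ∈ ℝ, k ∈ ℝ³, and χ ∈ ℂ⁴ with χ ≠ 0, and define the plane wave ψ : ℝ × ℝ³ → ℂ⁴ by ψ(t, x) = e^{i(Et + ⟨k, x⟩)} χ. Then for every point p = (t, x), the series Σ_{n≥0} ((iλ)^n / n!) (∂_t^n Δψ)(p) converges absolutely with sum e^{−λE} (Δψ)(p) = −|k|² e^{−λE} ψ(p), where Δ = ∂_1² + ∂_2² + ∂_3² is the spatial Laplacian. Moreover, ψ satisfies the deformed wave equation (∂_t² ψ)(p) = Σ_{n≥0} ((iλ)^n / n!) (∂_t^n Δψ)(p) for all p if and only if E² e^{λE} = |k|². -/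
open scoped BigOperators

noncomputable section

/-- Spacetime points `(t, x)` with `t ∈ ℝ` and `x ∈ ℝ³`. -/
abbrev SpacetimePt : Type := ℝ × (Fin 3 → ℝ)

/-- Spinor-valued fields on spacetime. -/
abbrev SpinorField : Type := SpacetimePt → (Fin 4 → ℂ)

/-- The time derivative `∂_t`. -/
def dT (f : SpinorField) : SpinorField :=
  fun p => deriv (fun s => f (s, p.2)) p.1

/-- The spatial partial derivative `∂_j`, `j = 1, 2, 3`. -/
def dSp (j : Fin 3) (f : SpinorField) : SpinorField :=
  fun p => deriv (fun s => f (p.1, Function.update p.2 j s)) (p.2 j)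

/-- The spatial Laplacian `Δ = ∂₁² + ∂₂² + ∂₃²`. -/
def spatialLap (f : SpinorField) : SpinorField :=
  fun p => ∑ j : Fin 3, dSp j (dSp j f) p

/-- The plane wave `ψ(t, x) = e^{i(Et + ⟨k, x⟩)} χ`. -/
def planeWave (E : ℝ) (k : Fin 3 → ℝ) (χ : Fin 4 → ℂ) : SpinorField :=
  fun p => Complex.exp (Complex.I * ((E : ℂ) * (p.1 : ℂ) + ∑ j, (k j : ℂ) * (p.2 j : ℂ))) • χ

lemma pw_hasDerivAt (a b : ℂ) (χ : Fin 4 → ℂ) (t : ℝ) :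
    HasDerivAt (fun s : ℝ => Complex.exp (Complex.I * (a * s + b)) • χ)
      ((Complex.I * a * Complex.exp (Complex.I * (a * t + b))) • χ) t := by
  have h1 : HasDerivAt (fun z : ℂ => Complex.I * (a * z + b)) (Complex.I * a) (t : ℂ) := by
    simpa using (((hasDerivAt_id (t:ℂ)).const_mul a).add_const b).const_mul Complex.I
  have h2 : HasDerivAt (fun z : ℂ => Complex.exp (Complex.I * (a * z + b)))
      (Complex.exp (Complex.I * (a * t + b)) * (Complex.I * a)) (t : ℂ) :=
    (Complex.hasDerivAt_exp _).comp _ h1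
  simpa [mul_comm] using h2.comp_ofReal.smul_const χ

lemma dT_pw (E : ℝ) (k : Fin 3 → ℝ) (χ : Fin 4 → ℂ) (c : ℂ) (p : SpacetimePt) :
    dT (fun q => c • planeWave E k χ q) p = (c * (Complex.I * E)) • planeWave E k χ p := by
  have hfun : (fun s : ℝ => c • planeWave E k χ (s, p.2))
      = fun s : ℝ => Complex.exp (Complex.I * ((E : ℂ) * s + ∑ j, (k j : ℂ) * (p.2 j : ℂ))) • (c • χ) := by
    funext s
    simp [planeWave, smul_comm c]
  have h := (pw_hasDerivAt (E : ℂ) (∑ j, (k j : ℂ) * (p.2 j : ℂ)) (c • χ) p.1).deriv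
  unfold dT
  rw [hfun, h]
  simp only [planeWave, smul_smul]
  ring_nf

lemma dSp_pw (E : ℝ) (k : Fin 3 → ℝ) (χ : Fin 4 → ℂ) (c : ℂ) (j : Fin 3) (p : SpacetimePt) :
    dSp j (fun q => c • planeWave E k χ q) p = (c * (Complex.I * (k j))) • planeWave E k χ p := by
  set b : ℂ := (E : ℂ) * p.1 + ∑ m ∈ Finset.univ.erase j, (k m : ℂ) * (p.2 m : ℂ) with hb
  have hsum : ∀ s : ℝ, (E : ℂ) * (p.1 : ℂ) + ∑ m, (k m : ℂ) * ((Function.update p.2 j s m : ℝ) : ℂ)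
      = (k j : ℂ) * (s : ℂ) + b := by
    intro s
    have heq : (fun m => (k m : ℂ) * ((Function.update p.2 j s m : ℝ) : ℂ))
        = Function.update (fun m => (k m : ℂ) * (p.2 m : ℂ)) j ((k j : ℂ) * (s : ℂ)) := by
      funext m
      by_cases h : m = j <;> simp [Function.update, h]
    rw [show (∑ m, (k m : ℂ) * ((Function.update p.2 j s m : ℝ) : ℂ))
        = ∑ m, Function.update (fun m => (k m : ℂ) * (p.2 m : ℂ)) j ((k j : ℂ) * (s : ℂ)) m from by
          rw [heq],
      Finset.sum_update_of_mem (Finset.mem_univ j), hb, Finset.erase_eq]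
    ring
  have hfun : (fun s : ℝ => c • planeWave E k χ (p.1, Function.update p.2 j s))
      = fun s : ℝ => Complex.exp (Complex.I * ((k j : ℂ) * s + b)) • (c • χ) := by
    funext s
    simp only [planeWave]
    rw [show ((E : ℂ) * ((p.1 : ℝ) : ℂ) + ∑ m, (k m : ℂ) * ((Function.update p.2 j s m : ℝ) : ℂ))
        = (k j : ℂ) * (s : ℂ) + b from hsum s]
    rw [smul_comm]
  have key : (Complex.I : ℂ) * ((k j : ℂ) * (p.2 j : ℂ) + b)
      = Complex.I * ((E : ℂ) * (p.1 : ℂ) + ∑ m, (k m : ℂ) * (p.2 m : ℂ)) := by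
    have h := hsum (p.2 j)
    simp only [Function.update_eq_self] at h
    rw [← h]
  have h := (pw_hasDerivAt ((k j : ℂ)) b (c • χ) (p.2 j)).deriv
  unfold dSp
  rw [hfun, h, key]
  simp only [planeWave, smul_smul]
  ring_nf

/-- For the plane wave `ψ = e^{i(Et + ⟨k,x⟩)} χ` with `χ ≠ 0`, the series
`Σₙ ((iλ)ⁿ/n!) (∂_tⁿ Δψ)(p)` converges absolutely with sum
`e^{−λE} (Δψ)(p) = −|k|² e^{−λE} ψ(p)`, and `ψ` solves the deformed wave equation
`∂_t²ψ = Σₙ ((iλ)ⁿ/n!) ∂_tⁿ Δψ` if and only if the deformed dispersion relation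
`E² e^{λE} = |k|²` holds. -/
theorem kappa_minkowski_dispersion (lam E : ℝ) (k : Fin 3 → ℝ) (χ : Fin 4 → ℂ) (hχ : χ ≠ 0) :
    (∀ p : SpacetimePt,
      Summable (fun n : ℕ =>
        ‖((Complex.I * (lam : ℂ)) ^ n / (n.factorial : ℂ)) •
          dT^[n] (spatialLap (planeWave E k χ)) p‖) ∧
      HasSum (fun n : ℕ =>
          ((Complex.I * (lam : ℂ)) ^ n / (n.factorial : ℂ)) •
            dT^[n] (spatialLap (planeWave E k χ)) p)
        (((Real.exp (-(lam * E)) : ℝ) : ℂ) • spatialLap (planeWave E k χ) p) ∧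
      spatialLap (planeWave E k χ) p =
        ((-(∑ j, (k j) ^ 2) : ℝ) : ℂ) • planeWave E k χ p) ∧
    ((∀ p : SpacetimePt,
        dT (dT (planeWave E k χ)) p =
          ∑' n : ℕ, ((Complex.I * (lam : ℂ)) ^ n / (n.factorial : ℂ)) •
            dT^[n] (spatialLap (planeWave E k χ)) p) ↔
      E ^ 2 * Real.exp (lam * E) = ∑ j, (k j) ^ 2) := by
  
  classical
  set K : ℝ := ∑ j, (k j) ^ 2 with hK
  set C : ℂ := ((-K : ℝ) : ℂ) with hC
  set pw := planeWave E k χ with hpw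
  -- first derivatives at function level
  have hdSpfun : ∀ j : Fin 3, dSp j pw = fun q => (Complex.I * (k j)) • pw q := by
    intro j; funext q
    have := dSp_pw E k χ 1 j q
    simpa using this
  have hdTfun : dT pw = fun q => (Complex.I * E) • pw q := by
    funext q
    have := dT_pw E k χ 1 q
    simpa using this
  -- Laplacian
  have hlap : ∀ p : SpacetimePt, spatialLap pw p = C • pw p := by
    intro p
    unfold spatialLap
    have h1 : ∀ j : Fin 3, dSp j (dSp j pw) p = ((Complex.I * (k j)) * (Complex.I * (k j))) • pw p := by
      intro j
      rw [hdSpfun j]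
      exact dSp_pw E k χ _ j p
    have h2 : ∀ j : Fin 3, ((Complex.I * (k j)) * (Complex.I * (k j))) = -(((k j : ℝ) : ℂ) ^ 2) := by
      intro j
      have : (Complex.I * (k j)) * (Complex.I * (k j)) = (Complex.I * Complex.I) * ((k j : ℂ) * (k j)) := by ring
      rw [this, Complex.I_mul_I]; ring
    calc (∑ j : Fin 3, dSp j (dSp j pw) p) = ∑ j : Fin 3, (-(((k j : ℝ) : ℂ) ^ 2)) • pw p := by
          refine Finset.sum_congr rfl fun j _ => ?_
          rw [h1 j, h2 j]
      _ = (∑ j : Fin 3, -(((k j : ℝ) : ℂ) ^ 2)) • pw p := by rw [Finset.sum_smul]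
      _ = C • pw p := by
          congr 1
          rw [hC, hK]
          push_cast
          rw [← Finset.sum_neg_distrib]
  have hlapfun : spatialLap pw = fun q => C • pw q := funext hlap
  -- iterated time derivatives
  have hiter : ∀ (n : ℕ) (c : ℂ), dT^[n] (fun q => c • pw q) = fun q => ((Complex.I * E) ^ n * c) • pw q := by
    intro n
    induction n with
    | zero => intro c; simp
    | succ n ih =>
      intro c
      rw [Function.iterate_succ_apply]
      have hd : dT (fun q => c • pw q) = fun q => (c * (Complex.I * E)) • pw q :=
        funext fun q => dT_pw E k χ c q
      rw [hd, ih]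
      funext q
      congr 1
      ring
  set z : ℂ := ((-(lam * E) : ℝ) : ℂ) with hz
  have hzz : z = (Complex.I * lam) * (Complex.I * E) := by
    have : (Complex.I * (lam : ℂ)) * (Complex.I * (E : ℂ)) = (Complex.I * Complex.I) * ((lam : ℂ) * E) := by ring
    rw [this, Complex.I_mul_I, hz]
    push_cast
    ring
  have hterm : ∀ (p : SpacetimePt) (n : ℕ),
      ((Complex.I * (lam : ℂ)) ^ n / (n.factorial : ℂ)) • dT^[n] (spatialLap pw) p
        = (z ^ n / (n.factorial : ℂ)) • (C • pw p) := by
    intro p n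
    rw [hlapfun, hiter n C]
    simp only [smul_smul]
    congr 1
    rw [hzz, mul_pow]
    ring
  have hexp : HasSum (fun n : ℕ => z ^ n / (n.factorial : ℂ)) ((Real.exp (-(lam * E)) : ℝ) : ℂ) := by
    have h := NormedSpace.expSeries_div_hasSum_exp z
    have : NormedSpace.exp z = ((Real.exp (-(lam * E)) : ℝ) : ℂ) := by
      rw [← Complex.exp_eq_exp_ℂ, hz, ← Complex.ofReal_exp]
    rwa [this] at h
  have hHasSum : ∀ p : SpacetimePt,
      HasSum (fun n : ℕ => ((Complex.I * (lam : ℂ)) ^ n / (n.factorial : ℂ)) • dT^[n] (spatialLap pw) p)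
        (((Real.exp (-(lam * E)) : ℝ) : ℂ) • spatialLap pw p) := by
    intro p
    have h2 := hexp.smul_const (C • pw p)
    rw [hlap p]
    simpa only [hterm p] using h2
  -- second time derivative
  have hdT2 : ∀ p : SpacetimePt, dT (dT pw) p = (-((E : ℂ) ^ 2)) • pw p := by
    intro p
    rw [hdTfun]
    have h := dT_pw E k χ (Complex.I * E) p
    rw [h]
    congr 1
    have : (Complex.I * (E : ℂ)) * (Complex.I * E) = (Complex.I * Complex.I) * ((E : ℂ) * E) := by ring
    rw [this, Complex.I_mul_I]
    ring
  have hpwne : ∀ p : SpacetimePt, pw p ≠ 0 := by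
    intro p
    simp only [hpw, planeWave]
    exact smul_ne_zero (Complex.exp_ne_zero _) hχ
  refine ⟨fun p => ⟨?_, hHasSum p, by rw [hlap p]⟩, ?_⟩
  · -- summability of norms
    simp only [hterm p]
    have heqn : ∀ n : ℕ, ‖(z ^ n / (n.factorial : ℂ)) • (C • pw p)‖
        = |lam * E| ^ n / (n.factorial : ℝ) * ‖C • pw p‖ := by
      intro n
      have hnz : ‖z‖ = |lam * E| := by rw [hz]; simp [abs_mul]
      rw [norm_smul, norm_div, norm_pow, hnz]
      simp
    rw [funext heqn]
    exact (Real.summable_pow_div_factorial _).mul_right _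
  · -- the equivalence
    have htsum : ∀ p : SpacetimePt,
        (∑' n : ℕ, ((Complex.I * (lam : ℂ)) ^ n / (n.factorial : ℂ)) • dT^[n] (spatialLap pw) p)
          = (((Real.exp (-(lam * E)) : ℝ) : ℂ) * C) • pw p := by
      intro p
      rw [(hHasSum p).tsum_eq, hlap p, smul_smul]
    constructor
    · intro h
      have h0 := h (0, 0)
      rw [hdT2, htsum] at h0
      have hscal : (-((E : ℂ) ^ 2)) = ((Real.exp (-(lam * E)) : ℝ) : ℂ) * C := by
        have hsub : ((-((E : ℂ) ^ 2)) - ((Real.exp (-(lam * E)) : ℝ) : ℂ) * C) • pw (0, 0) = 0 := by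
          rw [sub_smul, h0, sub_self]
        rcases smul_eq_zero.mp hsub with h' | h'
        · exact sub_eq_zero.mp h'
        · exact absurd h' (hpwne (0, 0))
      have hre : E ^ 2 = Real.exp (-(lam * E)) * K := by
        have : ((E ^ 2 : ℝ) : ℂ) = ((Real.exp (-(lam * E)) * K : ℝ) : ℂ) := by
          rw [hC] at hscal
          push_cast at hscal ⊢
          linear_combination -hscal
        exact_mod_cast this
      rw [Real.exp_neg] at hre
      rw [hre]
      field_simp
    · intro h
      intro p
      rw [hdT2, htsum]
      congr 1
      have hre : E ^ 2 = Real.exp (-(lam * E)) * K := by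
        rw [Real.exp_neg]
        field_simp
        rw [mul_comm lam E] at h
        linarith [h]
      have hc : ((E ^ 2 : ℝ) : ℂ) = ((Real.exp (-(lam * E)) * K : ℝ) : ℂ) :=
        Complex.ofReal_inj.mpr hre
      rw [hC]
      push_cast at hc ⊢
      linear_combination -hc
end
end

section
/- Let γ⁰, γ³ ∈ M₄(ℂ) satisfy (γ⁰)² = 1, (γ³)² = −1, and γ⁰γ³ + γ³γ⁰ = 0. Let λ, E, k ∈ ℝ with E > 0 and E² e^{λE} = k². Then k ≠ 0, and for every χ ∈ ℂ⁴ one has (E γ⁰ + k e^{−λE/2} γ³) χ = 0 if and only if (γ⁰ + sgn(k) γ³) χ = 0. In particular, the space of solutions of the polarization equation is independent of the deformation parameter λ. -/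
noncomputable section

/-- Let `γ⁰, γ³ ∈ M₄(ℂ)` with `(γ⁰)² = 1`, `(γ³)² = −1` and
`γ⁰γ³ + γ³γ⁰ = 0`, and let `λ, E, k ∈ ℝ` satisfy `E > 0` and the deformed on-shell condition
`E² e^{λE} = k²`.  Then `k ≠ 0` and, for every polarization spinor `χ ∈ ℂ⁴`, the deformed
polarization equation `(E γ⁰ + k e^{−λE/2} γ³) χ = 0` is equivalent to the undeformed one
`(γ⁰ + sgn(k) γ³) χ = 0`; in particular the space of physical spin polarizations is
independent of the deformation parameter `λ`. -/
theorem kappa_minkowski_polarization_undeformed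
    (γ₀ γ₃ : Matrix (Fin 4) (Fin 4) ℂ)
    (hγ₀ : γ₀ * γ₀ = 1) (hγ₃ : γ₃ * γ₃ = -1)
    (hanti : γ₀ * γ₃ + γ₃ * γ₀ = 0)
    (lam E k : ℝ) (hE : 0 < E)
    (hshell : E ^ 2 * Real.exp (lam * E) = k ^ 2) :
    k ≠ 0 ∧
      ∀ χ : Fin 4 → ℂ,
        (((E : ℂ) • γ₀ + ((k * Real.exp (-(lam * E) / 2) : ℝ) : ℂ) • γ₃).mulVec χ = 0 ↔
          (γ₀ + ((Real.sign k : ℝ) : ℂ) • γ₃).mulVec χ = 0) := by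
  have hk : k ≠ 0 := by
    intro h
    rw [h] at hshell
    have h1 : (0:ℝ) < E ^ 2 * Real.exp (lam * E) :=
      mul_pos (pow_pos hE 2) (Real.exp_pos _)
    simp at hshell
    nlinarith
  have hsq : (k * Real.exp (-(lam * E) / 2)) ^ 2 = E ^ 2 := by
    have h2 : Real.exp (-(lam * E) / 2) ^ 2 = Real.exp (-(lam * E)) := by
      rw [← Real.exp_nat_mul]; ring_nf
    rw [mul_pow, h2, ← hshell, Real.exp_neg]
    field_simp
  have hcoef : k * Real.exp (-(lam * E) / 2) = E * Real.sign k := by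
    rcases lt_trichotomy k 0 with hlt | heq | hgt
    · rw [Real.sign_of_neg hlt]
      have hneg : k * Real.exp (-(lam * E) / 2) < 0 :=
        mul_neg_of_neg_of_pos hlt (Real.exp_pos _)
      nlinarith [sq_nonneg (k * Real.exp (-(lam * E) / 2) + E)]
    · exact absurd heq hk
    · rw [Real.sign_of_pos hgt]
      have hpos : 0 < k * Real.exp (-(lam * E) / 2) :=
        mul_pos hgt (Real.exp_pos _)
      nlinarith [sq_nonneg (k * Real.exp (-(lam * E) / 2) - E)]
  refine ⟨hk, fun χ => ?_⟩
  have hmat : ((E : ℂ) • γ₀ + ((k * Real.exp (-(lam * E) / 2) : ℝ) : ℂ) • γ₃)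
      = (E : ℂ) • (γ₀ + ((Real.sign k : ℝ) : ℂ) • γ₃) := by
    rw [hcoef]
    push_cast
    rw [smul_add, smul_smul]
  rw [hmat, Matrix.smul_mulVec, smul_eq_zero]
  have hE' : (E : ℂ) ≠ 0 := by exact_mod_cast hE.ne'
  simp [hE']
end
end
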